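/- (Hyperplane-barrier property) Let f : ℤⁿ → ℝ ∪ {+∞} be integrally convex, x̂ ∈ dom f, q ∈ ℤ, and 1 ≤ i ≤ n. If x̂_i < q and f(x̂) ≤ f(y) for all y ∈ ℤⁿ with y_i = q, then f(x̂) ≤ f(z) for all z ∈ ℤⁿ with z_i ≥ q. -/
import Mathlib


open scoped BigOperators

noncomputable section

/-- Integer neighborhood `N(x)` of a real point. -/
def intNbhd {n : ℕ} (x : Fin n → ℝ) : Set (Fin n → ℤ) :=
  {z | ∀ i, |x i - (z i : ℝ)| < 1}

/-- Local convex extension of `f : ℤⁿ → ℝ ∪ {+∞}`. -/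
noncomputable def localExt {n : ℕ} (f : (Fin n → ℤ) → EReal) (x : Fin n → ℝ) : EReal :=
  sInf { v : EReal | ∃ (m : ℕ) (lam : Fin m → ℝ) (y : Fin m → (Fin n → ℤ)),
      (∀ j, 0 ≤ lam j) ∧ (∑ j, lam j) = 1 ∧ (∀ j, y j ∈ intNbhd x) ∧
      (∀ i, (∑ j, lam j * ((y j i : ℝ))) = x i) ∧
      v = ∑ j, (((lam j : ℝ) : EReal) * f (y j)) }

/-- A function is integrally convex if its local convex extension is convex. -/
def IsIntegrallyConvexFn {n : ℕ} (f : (Fin n → ℤ) → EReal) : Prop :=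
  ∀ x y : Fin n → ℝ, ∀ t : ℝ, 0 ≤ t → t ≤ 1 →
    localExt f (fun i => t * x i + (1 - t) * y i) ≤
      ((t : ℝ) : EReal) * localExt f x + (((1 - t : ℝ)) : EReal) * localExt f y

/-- Coercion of an integer point to a real point. -/
def realify {n : ℕ} (z : Fin n → ℤ) : Fin n → ℝ := fun i => (z i : ℝ)

/-- A set `S ⊆ ℤⁿ` is integrally convex. -/
def IsIntegrallyConvexSet {n : ℕ} (S : Set (Fin n → ℤ)) : Prop :=
  ∀ x : Fin n → ℝ, x ∈ convexHull ℝ (realify '' S) →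
    x ∈ convexHull ℝ (realify '' (S ∩ intNbhd x))

private lemma ereal_coe_sum {m : ℕ} (g : Fin m → ℝ) :
    ((∑ j, g j : ℝ) : EReal) = ∑ j, ((g j : ℝ) : EReal) :=
  map_sum (⟨⟨(↑), EReal.coe_zero⟩, fun _ _ => EReal.coe_add _ _⟩ : ℝ →+ EReal) g Finset.univ

/-- The local extension at an integer point is at most the value there. -/
private lemma localExt_le_self {n : ℕ} (f : (Fin n → ℤ) → EReal) (w : Fin n → ℤ) :
    localExt f (realify w) ≤ f w := by
  apply sInf_le
  refine ⟨1, fun _ => 1, fun _ => w, fun _ => zero_le_one, by simp, ?_, ?_, ?_⟩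
  · intro j i; simp [realify]
  · intro i; simp [realify]
  · simp

/-- Hyperplane-barrier property for integrally convex functions. -/
theorem hyperplane_barrier_property {n : ℕ}
    (f : (Fin n → ℤ) → EReal) (hbot : ∀ x, f x ≠ ⊥)
    (hf : IsIntegrallyConvexFn f)
    (xhat : Fin n → ℤ) (hxdom : f xhat ≠ ⊤)
    (q : ℤ) (i : Fin n) (hxq : xhat i < q)
    (hbar : ∀ y : Fin n → ℤ, y i = q → f xhat ≤ f y) :
    ∀ z : Fin n → ℤ, q ≤ z i → f xhat ≤ f z := by
  intro z hz
  rcases eq_or_lt_of_le hz with hq | hq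
  · exact hbar z hq.symm
  -- now q < z i
  obtain ⟨c, hc⟩ : ∃ c : ℝ, f xhat = (c : EReal) := by
    lift f xhat to ℝ using ⟨hxdom, hbot xhat⟩ with c hc
    exact ⟨c, rfl⟩
  set a : ℝ := (xhat i : ℝ) with ha
  set b : ℝ := (z i : ℝ) with hb
  have haq : a < (q : ℝ) := by rw [ha]; exact_mod_cast hxq
  have hqb : (q : ℝ) < b := by rw [hb]; exact_mod_cast hq
  set t : ℝ := (b - (q : ℝ)) / (b - a) with ht
  have hba : 0 < b - a := by linarith
  have ht0 : 0 < t := div_pos (by linarith) hba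
  have ht1 : t < 1 := by
    rw [ht, div_lt_one hba]; linarith
  -- the barrier point
  set p : Fin n → ℝ := fun j => t * (realify xhat j) + (1 - t) * (realify z j) with hp
  have hpi : p i = (q : ℝ) := by
    show t * (realify xhat i) + (1 - t) * (realify z i) = (q : ℝ)
    have h1 : realify xhat i = a := rfl
    have h2 : realify z i = b := rfl
    rw [h1, h2, ht]
    field_simp
    ring
  -- lower bound : c ≤ localExt f p
  have hlow : (c : EReal) ≤ localExt f p := by
    apply le_sInf
    rintro v ⟨m, lam, y, hnn, hsum, hnb, -, rfl⟩
    have hterm : ∀ j, ((lam j * c : ℝ) : EReal) ≤ ((lam j : ℝ) : EReal) * f (y j) := by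
      intro j
      have hyq : y j i = q := by
        have := hnb j i
        rw [hpi] at this
        have : |(q : ℝ) - ((y j i : ℤ) : ℝ)| < 1 := this
        have h2 : |((q - y j i : ℤ) : ℝ)| < 1 := by push_cast; convert this using 2
        rw [← Int.cast_abs] at h2
        have h3 : |q - y j i| < 1 := by exact_mod_cast h2
        rw [abs_lt] at h3
        omega
      have hfy : (c : EReal) ≤ f (y j) := hc ▸ hbar (y j) hyq
      calc ((lam j * c : ℝ) : EReal) = ((lam j : ℝ) : EReal) * (c : EReal) := EReal.coe_mul _ _
        _ ≤ ((lam j : ℝ) : EReal) * f (y j) :=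
            mul_le_mul_of_nonneg_left hfy (by exact_mod_cast hnn j)
    calc (c : EReal) = ((∑ j, lam j * c : ℝ) : EReal) := by
          rw [← Finset.sum_mul, hsum, one_mul]
      _ = ∑ j, ((lam j * c : ℝ) : EReal) := ereal_coe_sum _
      _ ≤ ∑ j, ((lam j : ℝ) : EReal) * f (y j) := Finset.sum_le_sum fun j _ => hterm j
  -- convexity
  have hconv := hf (realify xhat) (realify z) t (le_of_lt ht0) (le_of_lt ht1)
  have hkey : (c : EReal) ≤ ((t : ℝ) : EReal) * f xhat + (((1 - t : ℝ)) : EReal) * f z := by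
    refine le_trans hlow (le_trans hconv (add_le_add ?_ ?_))
    · exact mul_le_mul_of_nonneg_left (localExt_le_self f xhat) (by exact_mod_cast ht0.le)
    · exact mul_le_mul_of_nonneg_left (localExt_le_self f z) (by exact_mod_cast (by linarith : (0:ℝ) ≤ 1 - t))
  rcases eq_or_ne (f z) ⊤ with hfz | hfz
  · rw [hfz]; exact le_top
  obtain ⟨s, hs⟩ : ∃ s : ℝ, f z = (s : EReal) := by
    lift f z to ℝ using ⟨hfz, hbot z⟩ with s hs
    exact ⟨s, rfl⟩
  rw [hc, hs] at hkey
  rw [← EReal.coe_mul, ← EReal.coe_mul, ← EReal.coe_add] at hkey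
  have hkeyR : c ≤ t * c + (1 - t) * s := by exact_mod_cast hkey
  have : c ≤ s := by nlinarith
  rw [hc, hs]
  exact_mod_cast this
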